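/- For 0 < r ≤ 1, the critical value of the local-search approximation ratio satisfies g(x*, r) = (2r² + 8)/(r − 2)², where x* = ((2+r)/(2−r))^{1/r} and g(x,r) = (2x^{2r} − 2r·x^r − 2)/((2−r)·x^r − 2); moreover g(x*, r) is increasing in r on (0,1] with maximum value 10 at r = 1. -/

import Mathlib

theorem local_search_ratio_critical_value
    (g : ℝ → ℝ → ℝ)
    (hg : ∀ x r : ℝ, g x r =
      (2 * x ^ (2 * r) - 2 * r * x ^ r - 2) / ((2 - r) * x ^ r - 2)) :
    (∀ r : ℝ, 0 < r → r ≤ 1 →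
        g (((2 + r) / (2 - r)) ^ (1 / r)) r = (2 * r ^ 2 + 8) / (r - 2) ^ 2) ∧
    (∀ r₁ r₂ : ℝ, 0 < r₁ → r₁ ≤ r₂ → r₂ ≤ 1 →
        (2 * r₁ ^ 2 + 8) / (r₁ - 2) ^ 2 ≤ (2 * r₂ ^ 2 + 8) / (r₂ - 2) ^ 2) ∧
    (2 * (1 : ℝ) ^ 2 + 8) / ((1 : ℝ) - 2) ^ 2 = 10 := by
  refine ⟨?_, ?_, by norm_num⟩
  · intro r hr hr1
    have h2r : (0:ℝ) < 2 - r := by linarith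
    have ht : (0:ℝ) < (2 + r) / (2 - r) := by positivity
    set t : ℝ := (2 + r) / (2 - r) with htdef
    have hxr : (t ^ (1 / r)) ^ r = t := by
      rw [← Real.rpow_mul ht.le, one_div, inv_mul_cancel₀ hr.ne', Real.rpow_one]
    have hx2r : (t ^ (1 / r)) ^ (2 * r) = t ^ 2 := by
      rw [mul_comm, Real.rpow_mul (Real.rpow_nonneg ht.le _), hxr,
        show ((2:ℝ)) = ((2:ℕ):ℝ) by norm_num, Real.rpow_natCast]
    rw [hg, hxr, hx2r]
    have htval : (2 - r) * t - 2 = r := by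
      rw [htdef]; field_simp <;> ring
    rw [htval]
    have : t ^ 2 = (2 + r) ^ 2 / (2 - r) ^ 2 := by
      rw [htdef, div_pow]
    rw [this, htdef]
    have hne : ((2:ℝ) - r) ^ 2 ≠ 0 := pow_ne_zero 2 (by intro h; rw [sub_eq_zero] at h; linarith)
    rw [div_eq_div_iff hr.ne' (pow_ne_zero 2 (show r - 2 ≠ 0 by intro h; rw [sub_eq_zero] at h; linarith))]
    field_simp
    ring
  · intro r₁ r₂ h1 h12 h21
    have hd1 : (0:ℝ) < (r₁ - 2) ^ 2 := by nlinarith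
    have hd2 : (0:ℝ) < (r₂ - 2) ^ 2 := by nlinarith
    rw [div_le_div_iff₀ hd1 hd2]
    have h4 : r₁ * r₂ ≤ 4 := by nlinarith
    nlinarith [mul_nonneg (sub_nonneg.2 h12) (sub_nonneg.2 h4)]
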